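/- Let n ≥ 1, 0 ≤ k ≤ n, and r ≥ 0. The pullback map Φ^* restricts to a linear isomorphism from P̊_rΛ^k(T^n) onto P̊̊_{2r+k}Λ^k_e(S^n), the space of even forms in P̊̊_{2r+k}Λ^k(S^n). -/

import Mathlib

open scoped BigOperators
open MeasureTheory

noncomputable section

/-- Vectors in `ℝ^m`. -/
abbrev Vec (m : ℕ) := Fin m → ℝ

/-- Differential `k`-forms on `ℝ^m`, given pointwise as alternating `k`-tensors. -/
abbrev Form (m k : ℕ) := Vec m → (Vec m [⋀^Fin k]→ₗ[ℝ] ℝ)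

/-- A multivariate polynomial has (total) degree at most `r : ℤ`. -/
def degLE {m : ℕ} (r : ℤ) (p : MvPolynomial (Fin m) ℝ) : Prop :=
  ∀ d ∈ p.support, ((d.sum fun _ e => e : ℕ) : ℤ) ≤ r

/-- `P_rΛ^k(ℝ^m)`: differential `k`-forms with polynomial coefficients of degree at most `r`. -/
def PL (m k : ℕ) (r : ℤ) : Set (Form m k) :=
  {α | ∀ v : Fin k → Vec m, ∃ p : MvPolynomial (Fin m) ℝ,
      degLE r p ∧ ∀ x, α x v = MvPolynomial.eval x p}

/-- Interior product with the radial vector field `X = Σ xᵢ ∂/∂xᵢ`. -/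
def iU {m k : ℕ} (β : Form m (k + 1)) : Form m k := fun x => (β x).curryLeft x

/-- `P_r⁻Λ^k(ℝ^m) := i_X P_{r-1}Λ^{k+1}(ℝ^m)`. -/
def PLm (m k : ℕ) (r : ℤ) : Set (Form m k) := iU '' PL m (k + 1) (r - 1)

/-- The reflection negating the `i`-th coordinate, as a map. -/
def reflFun (m : ℕ) (i : Fin m) (u : Vec m) : Vec m := fun j => if j = i then -u j else u j

/-- The reflection negating the `i`-th coordinate, as a linear map. -/
def reflLin (m : ℕ) (i : Fin m) : Vec m →ₗ[ℝ] Vec m :=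
  LinearMap.pi fun j => if j = i then -LinearMap.proj j else LinearMap.proj j

/-- Pullback of an ambient form along the reflection `R_i`. -/
def reflPull (m k : ℕ) (i : Fin m) (α : Form m k) : Form m k :=
  fun x => (α (reflFun m i x)).compLinearMap (reflLin m i)

/-- A form on `ℝ^m` is even if it is invariant under all coordinate reflections. -/
def IsEven (m k : ℕ) (α : Form m k) : Prop := ∀ i, reflPull m k i α = α

/-- A form on `ℝ^m` is odd if every coordinate reflection negates it. -/
def IsOdd (m k : ℕ) (α : Form m k) : Prop := ∀ i, reflPull m k i α = -α

/-- The map `Φ(u) = (u₁², …, u_m²)`. -/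
def Phi (m : ℕ) (u : Vec m) : Vec m := fun i => u i ^ 2

/-- The differential of `Φ` at `u`. -/
def dPhi (m : ℕ) (u : Vec m) : Vec m →ₗ[ℝ] Vec m :=
  LinearMap.pi fun i => (2 * u i) • LinearMap.proj i

/-- Pullback of ambient forms along `Φ`. -/
def phiPull (m k : ℕ) (α : Form m k) : Form m k :=
  fun u => (α (Phi m u)).compLinearMap (dPhi m u)

/-- The standard simplex `T^{m-1} ⊂ ℝ^m`. -/
def simplexSet (m : ℕ) : Set (Vec m) := {x | (∀ i, 0 ≤ x i) ∧ ∑ i, x i = 1}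

/-- The unit sphere `S^{m-1} ⊂ ℝ^m`. -/
def sphereSet (m : ℕ) : Set (Vec m) := {u | ∑ i, u i ^ 2 = 1}

/-- The linear functional `v ↦ ⟨u, v⟩`. -/
def dotLin (m : ℕ) (u : Vec m) : Vec m →ₗ[ℝ] ℝ := ∑ i, u i • LinearMap.proj i

/-- Orthogonal projection onto the tangent space of the sphere at `u`. -/
def projSph (m : ℕ) (u : Vec m) : Vec m →ₗ[ℝ] Vec m :=
  LinearMap.id - (dotLin m u).smulRight u

/-- The linear functional `v ↦ Σ vᵢ`. -/
def sumLin (m : ℕ) : Vec m →ₗ[ℝ] ℝ := ∑ i, LinearMap.proj i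

/-- Orthogonal projection onto the tangent hyperplane `{Σ vᵢ = 0}` of the simplex. -/
def projSim (m : ℕ) : Vec m →ₗ[ℝ] Vec m :=
  LinearMap.id - ((m : ℝ)⁻¹ • sumLin m).smulRight (fun _ => 1)

/-- Differential `k`-forms on a subset `M ⊆ ℝ^m`, encoded at each point by the canonical
alternating tensor on `ℝ^m` that vanishes in the directions normal to `M` (i.e. the
pullback along the inclusion, extended by the tangent projection). -/
abbrev FormOn (m : ℕ) (M : Set (Vec m)) (k : ℕ) := M → (Vec m [⋀^Fin k]→ₗ[ℝ] ℝ)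

/-- Restriction (pullback along the inclusion) of an ambient form to the simplex. -/
def resSim (m k : ℕ) (α : Form m k) : FormOn m (simplexSet m) k :=
  fun x => (α x.1).compLinearMap (projSim m)

/-- Restriction (pullback along the inclusion) of an ambient form to the sphere. -/
def resSph (m k : ℕ) (α : Form m k) : FormOn m (sphereSet m) k :=
  fun u => (α u.1).compLinearMap (projSph m u.1)

/-- `P_rΛ^k(T^{m-1})`. -/
def PLsim (m k : ℕ) (r : ℤ) : Set (FormOn m (simplexSet m) k) := resSim m k '' PL m k r

/-- `P_rΛ^k(S^{m-1})`. -/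
def PLsph (m k : ℕ) (r : ℤ) : Set (FormOn m (sphereSet m) k) := resSph m k '' PL m k r

/-- `P_r⁻Λ^k(T^{m-1})`. -/
def PLmsim (m k : ℕ) (r : ℤ) : Set (FormOn m (simplexSet m) k) := resSim m k '' PLm m k r

/-- `P_r⁻Λ^k(S^{m-1})`. -/
def PLmsph (m k : ℕ) (r : ℤ) : Set (FormOn m (sphereSet m) k) := resSph m k '' PLm m k r

lemma phi_mem_simplex {m : ℕ} {u : Vec m} (hu : u ∈ sphereSet m) :
    Phi m u ∈ simplexSet m :=
  ⟨fun _ => sq_nonneg _, hu⟩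

/-- Pullback `Φ^* : Λ^k(T^{m-1}) → Λ^k(S^{m-1})` along `Φ : S^{m-1} → T^{m-1}`. -/
def phiPullTS (m k : ℕ) (a : FormOn m (simplexSet m) k) : FormOn m (sphereSet m) k :=
  fun u => (a ⟨Phi m u.1, phi_mem_simplex u.2⟩).compLinearMap
    ((dPhi m u.1).comp (projSph m u.1))

lemma refl_mem_sphere {m : ℕ} {i : Fin m} {u : Vec m} (hu : u ∈ sphereSet m) :
    reflFun m i u ∈ sphereSet m := by
  have : ∀ j, (reflFun m i u j) ^ 2 = u j ^ 2 := by
    intro j; simp only [reflFun]; split <;> ring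
  simpa only [sphereSet, Set.mem_setOf_eq, this] using hu

/-- Pullback of a form on the sphere along the reflection `R_i`. -/
def reflPullSph (m k : ℕ) (i : Fin m) (α : FormOn m (sphereSet m) k) :
    FormOn m (sphereSet m) k :=
  fun u => (α ⟨reflFun m i u.1, refl_mem_sphere u.2⟩).compLinearMap (reflLin m i)

/-- A form on the sphere is even if it is invariant under all coordinate reflections. -/
def IsEvenSph (m k : ℕ) (α : FormOn m (sphereSet m) k) : Prop :=
  ∀ i, reflPullSph m k i α = α

/-- A form on the sphere is odd if every coordinate reflection negates it. -/
def IsOddSph (m k : ℕ) (α : FormOn m (sphereSet m) k) : Prop :=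
  ∀ i, reflPullSph m k i α = -α

/-- The bubble function `u_N = u₁ ⋯ u_m`. -/
def bubble (m : ℕ) (u : Vec m) : ℝ := ∏ i, u i

/-- Multiplication of a form on the sphere by the bubble function. -/
def bubbleSmul (m k : ℕ) (α : FormOn m (sphereSet m) k) : FormOn m (sphereSet m) k :=
  fun u => bubble m u.1 • α u

/-- Multiplication of an ambient form by the bubble function. -/
def bubbleSmulAmb (m k : ℕ) (α : Form m k) : Form m k :=
  fun u => bubble m u • α u

/-- The standard volume form on `ℝ^m`. -/
def volForm (m : ℕ) : (Vec m) [⋀^Fin m]→ₗ[ℝ] ℝ := (Pi.basisFun ℝ (Fin m)).det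

/-- Iterated interior product: insert the vectors `v 0, …, v (k-1)` into the
first `k` slots of an alternating `(k+j)`-tensor. -/
def contrMany {m : ℕ} : (k : ℕ) → (Fin k → Vec m) → {j : ℕ} →
    ((Vec m) [⋀^Fin (k + j)]→ₗ[ℝ] ℝ) → ((Vec m) [⋀^Fin j]→ₗ[ℝ] ℝ)
  | 0, _, j, α => α.domDomCongr (finCongr (Nat.zero_add j))
  | (k + 1), v, j, α =>
      contrMany k (fun i => v i.succ)
        ((α.domDomCongr (finCongr (by omega : (k + 1) + j = (k + j) + 1))).curryLeft (v 0))

/-- The Hodge star on alternating tensors on `ℝ^m` (standard metric and orientation):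
`(⋆α)(w₁,…,w_{m-k}) = (1/k!) Σ_g α(e_{g 0},…,e_{g(k-1)}) vol(e_{g 0},…,e_{g(k-1)},w₁,…,w_{m-k})`. -/
def starAlt (m k : ℕ) (α : (Vec m) [⋀^Fin k]→ₗ[ℝ] ℝ) : (Vec m) [⋀^Fin (m - k)]→ₗ[ℝ] ℝ :=
  if h : k ≤ m then
    (k.factorial : ℝ)⁻¹ •
      ∑ g : Fin k → Fin m,
        α (fun i => Pi.single (g i) 1) •
          contrMany k (fun i => Pi.single (g i) 1)
            ((volForm m).domDomCongr (finCongr (by omega : m = k + (m - k))))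
  else 0

/-- The Hodge star `⋆_{ℝ^m}` applied pointwise to ambient forms. -/
def starR (m k : ℕ) (α : Form m k) : Form m (m - k) := fun x => starAlt m k (α x)

/-- The wedge product of alternating tensors. -/
def wedgeAlt {m k l : ℕ} (α : (Vec m) [⋀^Fin k]→ₗ[ℝ] ℝ) (β : (Vec m) [⋀^Fin l]→ₗ[ℝ] ℝ) :
    (Vec m) [⋀^Fin (k + l)]→ₗ[ℝ] ℝ :=
  ((TensorProduct.lid ℝ ℝ).toLinearMap.compAlternatingMap (α.domCoprod β)).domDomCongr
    finSumFinEquiv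

/-- The conormal `ν = Σ uᵢ duᵢ` at `u`, as an alternating 1-tensor. -/
def nuForm (m : ℕ) (u : Vec m) : (Vec m) [⋀^Fin 1]→ₗ[ℝ] ℝ :=
  AlternatingMap.ofSubsingleton ℝ (Vec m) ℝ (0 : Fin 1) (dotLin m u)

/-- The extended Hodge star `⋆_{S^{m-1}} α := ⋆_{ℝ^m}(ν ∧ α)` on ambient forms. -/
def starSphAmb (m k : ℕ) (α : Form m k) : Form m (m - (1 + k)) :=
  fun x => starAlt m (1 + k) (wedgeAlt (nuForm m x) (α x))

/-- The Hodge star of a form on the sphere (w.r.t. the round metric and the orientation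
induced by the outward normal), computed as the restriction of `⋆_{ℝ^m}(ν ∧ ·)`. -/
def starSph (m k : ℕ) (α : FormOn m (sphereSet m) k) :
    FormOn m (sphereSet m) (m - (1 + k)) :=
  fun u => (starAlt m (1 + k) (wedgeAlt (nuForm m u.1) (α u))).compLinearMap (projSph m u.1)

/-- Re-indexing a form along an equality of form degrees. -/
def castForm {m k l : ℕ} (h : k = l) (α : Form m k) : Form m l :=
  fun x => (α x).domDomCongr (finCongr h)

/-- Re-indexing a form on a subset along an equality of form degrees. -/
def castFormOn {m : ℕ} {M : Set (Vec m)} {k l : ℕ} (h : k = l) (α : FormOn m M k) :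
    FormOn m M l :=
  fun x => (α x).domDomCongr (finCongr h)

/-- Trace on the boundary of the simplex vanishes: at every boundary point (a point of some
face `xᵢ = 0`), the form vanishes on vectors tangent to that face. -/
def vanishBdry (m k : ℕ) (a : FormOn m (simplexSet m) k) : Prop :=
  ∀ (x : simplexSet m) (i : Fin m), x.1 i = 0 →
    ∀ v : Fin k → Vec m, (∀ j, (∑ l, v j l) = 0 ∧ v j i = 0) → a x v = 0

/-- `P̊_rΛ^k(T^{m-1})`: forms in `P_rΛ^k(T^{m-1})` with vanishing trace on the boundary. -/
def PLosim (m k : ℕ) (r : ℤ) : Set (FormOn m (simplexSet m) k) :=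
  {a ∈ PLsim m k r | vanishBdry m k a}

/-- `P̊_r⁻Λ^k(T^{m-1})`. -/
def PLmosim (m k : ℕ) (r : ℤ) : Set (FormOn m (simplexSet m) k) :=
  {a ∈ PLmsim m k r | vanishBdry m k a}

/-- A form on the sphere vanishes (as an alternating tensor on the tangent space)
at every point of `S^{m-1} ∩ Γ`, where `Γ = ∪ᵢ {uᵢ = 0}`. -/
def zeroOnGammaSph (m k : ℕ) (α : FormOn m (sphereSet m) k) : Prop :=
  ∀ u : sphereSet m, (∃ i, u.1 i = 0) →
    ∀ v : Fin k → Vec m, (∀ j, ∑ l, u.1 l * v j l = 0) → α u v = 0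

/-- An ambient form vanishes (as an alternating tensor) at every point of `Γ`. -/
def zeroOnGammaAmb (m k : ℕ) (α : Form m k) : Prop :=
  ∀ u : Vec m, (∃ i, u i = 0) → α u = 0

/-- The wedge product of forms on a subset. -/
def wedgeOn {m : ℕ} {M : Set (Vec m)} {k l : ℕ} (a : FormOn m M k) (b : FormOn m M l) :
    FormOn m M (k + l) :=
  fun x => wedgeAlt (a x) (b x)

/-- The base region of the parametrization of the simplex. -/
def baseSimplex (n : ℕ) : Set (Fin n → ℝ) := {y | (∀ j, 0 ≤ y j) ∧ ∑ j, y j ≤ 1}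

/-- Parametrization `y ↦ (1 - Σy, y)` of `T^n` over the base region. -/
def simplexParam (n : ℕ) (y : Fin n → ℝ) : Vec (n + 1) := Fin.cons (1 - ∑ j, y j) y

lemma simplexParam_mem {n : ℕ} {y : Fin n → ℝ} (h : y ∈ baseSimplex n) :
    simplexParam n y ∈ simplexSet (n + 1) := by
  constructor
  · intro i
    refine Fin.cases ?_ ?_ i
    · simpa [simplexParam] using sub_nonneg.mpr h.2
    · intro j; simpa [simplexParam] using h.1 j
  · simp [simplexParam, Fin.sum_cons]

/-- The coordinate tangent vectors `∂x/∂y_j = e_{j+1} - e_0` of the parametrization,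
a positively oriented frame for the orientation of `T^n` induced from the outward-normal
orientation of `S^n` via `Φ`. -/
def simplexTangent (n : ℕ) (j : Fin n) : Vec (n + 1) :=
  Fin.cons (-1) (Pi.single j 1)

open Classical in
/-- The integral of an `n`-form over the oriented simplex `T^n`. -/
def integralSimplex (n : ℕ) (ω : FormOn (n + 1) (simplexSet (n + 1)) n) : ℝ :=
  ∫ y : Fin n → ℝ,
    if h : y ∈ baseSimplex n then ω ⟨simplexParam n y, simplexParam_mem h⟩ (simplexTangent n)
    else 0

/-- Forms on a subset that genuinely are pullbacks to the simplex: they vanish in the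
normal directions (canonical representatives). -/
def TangentialSim (m k : ℕ) (a : FormOn m (simplexSet m) k) : Prop :=
  ∀ x, (a x).compLinearMap (projSim m) = a x

/-- Continuity of a form on a subset. -/
def ContFormOn (m : ℕ) (M : Set (Vec m)) (k : ℕ) (a : FormOn m M k) : Prop :=
  ∀ v : Fin k → Vec m, Continuous fun x : M => a x v

/-- The Riemannian volume form of the round sphere `S^{m-1}` (outward-normal orientation),
i.e. the restriction of `⋆_{ℝ^m} ν`. -/
def volSph (m : ℕ) : FormOn m (sphereSet m) (m - 1) :=
  fun u => (starAlt m 1 (nuForm m u.1)).compLinearMap (projSph m u.1)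


/-! ### Auxiliary lemmas -/

namespace Stmt10Aux

open MvPolynomial

variable {m : ℕ}

lemma degLE_zero {r : ℤ} : degLE r (0 : MvPolynomial (Fin m) ℝ) := by
  intro d hd; simp at hd

lemma degLE_add {r : ℤ} {p q : MvPolynomial (Fin m) ℝ} (hp : degLE r p) (hq : degLE r q) :
    degLE r (p + q) := by
  intro d hd
  rcases Finset.mem_union.mp (MvPolynomial.support_add hd) with h | h
  exacts [hp d h, hq d h]

lemma degLE_smul {r : ℤ} (c : ℝ) {p : MvPolynomial (Fin m) ℝ} (hp : degLE r p) :
    degLE r (c • p) := fun d hd => hp d (MvPolynomial.support_smul hd)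

lemma degLE_sum {A : Type*} {r : ℤ} {s : Finset A} {f : A → MvPolynomial (Fin m) ℝ}
    (h : ∀ a ∈ s, degLE r (f a)) : degLE r (∑ a ∈ s, f a) := by
  classical
  intro d hd
  obtain ⟨a, ha, hda⟩ := Finset.mem_biUnion.mp (MvPolynomial.support_sum hd)
  exact h a ha d hda

lemma degLE_mul {r s : ℤ} {p q : MvPolynomial (Fin m) ℝ} (hp : degLE r p) (hq : degLE s q) :
    degLE (r + s) (p * q) := by
  classical
  intro d hd
  obtain ⟨a, ha, b, hb, rfl⟩ := Finset.mem_add.mp (MvPolynomial.support_mul p q hd)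
  have : ((a + b).sum fun _ e => e) = (a.sum fun _ e => e) + (b.sum fun _ e => e) :=
    Finsupp.sum_add_index' (fun _ => rfl) (fun _ _ _ => rfl)
  rw [this, Nat.cast_add]
  exact add_le_add (hp a ha) (hq b hb)

lemma degLE_monomial {r : ℤ} {d : Fin m →₀ ℕ} {c : ℝ}
    (h : ((d.sum fun _ e => e : ℕ) : ℤ) ≤ r) : degLE r (monomial d c) := by
  intro d' hd'
  have := MvPolynomial.support_monomial_subset hd'
  simp only [Finset.mem_singleton] at this
  subst this; exact h

lemma degLE_one {r : ℤ} (hr : 0 ≤ r) : degLE r (1 : MvPolynomial (Fin m) ℝ) := by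
  have : (1 : MvPolynomial (Fin m) ℝ) = monomial 0 1 := by simp
  rw [this]
  exact degLE_monomial (by simp [hr])

lemma degLE_X {i : Fin m} : degLE 1 (X i : MvPolynomial (Fin m) ℝ) := by
  intro d hd
  rw [MvPolynomial.support_X, Finset.mem_singleton] at hd
  subst hd
  simp [Finsupp.sum_single_index]

lemma degLE_prod {A : Type*} {s : Finset A} {f : A → MvPolynomial (Fin m) ℝ} {r : A → ℤ}
    (h : ∀ a ∈ s, degLE (r a) (f a)) : degLE (∑ a ∈ s, r a) (∏ a ∈ s, f a) := by
  classical
  induction s using Finset.induction with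
  | empty => simpa using degLE_one le_rfl
  | insert a s ha ih =>
      rw [Finset.prod_insert ha, Finset.sum_insert ha]
      exact degLE_mul (h a (Finset.mem_insert_self a s))
        (ih fun b hb => h b (Finset.mem_insert_of_mem hb))

lemma degLE_mono {r s : ℤ} (hrs : r ≤ s) {p : MvPolynomial (Fin m) ℝ} (h : degLE r p) :
    degLE s p := fun d hd => le_trans (h d hd) hrs

lemma sumd (d : Fin m →₀ ℕ) : (d.sum fun _ e => e) = ∑ i, d i :=
  Finsupp.sum_fintype d (fun _ e => e) (fun _ => rfl)

/-- substitution `Xᵢ ↦ εᵢ Xᵢ`. -/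
def flipP (ε : Fin m → ℝ) (p : MvPolynomial (Fin m) ℝ) : MvPolynomial (Fin m) ℝ :=
  bind₁ (fun i => C (ε i) * X i) p

lemma flipP_monomial (ε : Fin m → ℝ) (d : Fin m →₀ ℕ) (c : ℝ) :
    flipP ε (monomial d c) = monomial d ((∏ i ∈ d.support, ε i ^ d i) * c) := by
  rw [flipP, bind₁_monomial]
  rw [MvPolynomial.monomial_eq]
  have : ∀ i ∈ d.support, (C (ε i) * X i) ^ d i
      = C (ε i ^ d i) * (X i : MvPolynomial (Fin m) ℝ) ^ d i := by
    intro i _; rw [mul_pow, ← map_pow]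
  rw [Finset.prod_congr rfl this, Finset.prod_mul_distrib, ← map_prod]
  rw [Finsupp.prod, ← mul_assoc, ← map_mul, mul_comm c]

lemma flipP_eq (ε : Fin m → ℝ) (p : MvPolynomial (Fin m) ℝ) :
    flipP ε p = ∑ d ∈ p.support, monomial d ((∏ i ∈ d.support, ε i ^ d i) * coeff d p) := by
  conv_lhs => rw [MvPolynomial.as_sum p]
  rw [flipP, map_sum]
  exact Finset.sum_congr rfl fun d _ => flipP_monomial ε d (coeff d p)

lemma coeff_flipP (ε : Fin m → ℝ) (d : Fin m →₀ ℕ) (p : MvPolynomial (Fin m) ℝ) :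
    coeff d (flipP ε p) = (∏ i ∈ d.support, ε i ^ d i) * coeff d p := by
  classical
  rw [flipP_eq, MvPolynomial.coeff_sum]
  by_cases hd : d ∈ p.support
  · rw [Finset.sum_eq_single d ?h1 ?h2]
    · rw [MvPolynomial.coeff_monomial, if_pos rfl]
    case h1 => intro d' _ hd'; rw [MvPolynomial.coeff_monomial, if_neg hd']
    case h2 => intro h; exact absurd hd h
  · have hc : coeff d p = 0 := MvPolynomial.notMem_support_iff.mp hd
    rw [hc, mul_zero]
    refine Finset.sum_eq_zero fun d' hd' => ?_
    rw [MvPolynomial.coeff_monomial, if_neg fun h => hd (by rwa [h] at hd')]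

lemma eval_flipP (ε : Fin m → ℝ) (u : Vec m) (p : MvPolynomial (Fin m) ℝ) :
    eval u (flipP ε p) = eval (fun i => ε i * u i) p := by
  conv_rhs => rw [MvPolynomial.as_sum p]
  rw [flipP_eq, map_sum, map_sum]
  refine Finset.sum_congr rfl fun d hd => ?_
  rw [MvPolynomial.eval_monomial, MvPolynomial.eval_monomial, Finsupp.prod, Finsupp.prod]
  have : ∀ i ∈ d.support, (ε i * u i) ^ d i = ε i ^ d i * u i ^ d i := fun i _ => mul_pow _ _ _
  rw [Finset.prod_congr rfl this, Finset.prod_mul_distrib]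
  ring

lemma degLE_flipP {r : ℤ} (ε : Fin m → ℝ) {p : MvPolynomial (Fin m) ℝ} (hp : degLE r p) :
    degLE r (flipP ε p) := by
  intro d hd
  apply hp
  rw [MvPolynomial.mem_support_iff] at hd ⊢
  intro h
  rw [coeff_flipP, h, mul_zero] at hd
  exact hd rfl

/-- substitution `Xᵢ ↦ Xᵢ²`. -/
def sqP (p : MvPolynomial (Fin m) ℝ) : MvPolynomial (Fin m) ℝ :=
  bind₁ (fun i => X i ^ 2) p

lemma support_two_smul (d : Fin m →₀ ℕ) : (2 • d).support = d.support := by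
  ext i
  simp only [Finsupp.mem_support_iff, Finsupp.smul_apply, smul_eq_mul]
  omega

lemma sqP_monomial (d : Fin m →₀ ℕ) (c : ℝ) :
    sqP (monomial d c) = monomial (2 • d) c := by
  rw [sqP, bind₁_monomial, MvPolynomial.monomial_eq, Finsupp.prod, support_two_smul]
  congr 1
  refine Finset.prod_congr rfl fun i _ => ?_
  have h2 : (2 • d) i = 2 * d i := rfl
  rw [h2, pow_mul]

set_option linter.unusedVariables false in
lemma sqP_eq (p : MvPolynomial (Fin m) ℝ) :
    sqP p = ∑ d ∈ p.support, monomial (2 • d) (coeff d p) := by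
  conv_lhs => rw [MvPolynomial.as_sum p]
  rw [sqP, map_sum]
  exact Finset.sum_congr rfl fun d _ => sqP_monomial d (coeff d p)

lemma eval_sqP (u : Vec m) (p : MvPolynomial (Fin m) ℝ) :
    eval u (sqP p) = eval (Phi m u) p := by
  conv_rhs => rw [MvPolynomial.as_sum p]
  rw [sqP_eq, map_sum, map_sum]
  refine Finset.sum_congr rfl fun d hd => ?_
  rw [MvPolynomial.eval_monomial, MvPolynomial.eval_monomial, Finsupp.prod, Finsupp.prod,
    support_two_smul]
  congr 1
  refine Finset.prod_congr rfl fun i _ => ?_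
  have h2 : (2 • d) i = 2 * d i := rfl
  rw [h2, pow_mul]
  rfl

lemma degLE_sqP {r : ℤ} {p : MvPolynomial (Fin m) ℝ} (hp : degLE r p) :
    degLE (2 * r) (sqP p) := by
  rw [sqP_eq]
  apply degLE_sum
  intro d hd
  apply degLE_monomial
  rw [sumd]
  have h2 : (∑ i, (2 • d) i) = 2 * ∑ i, d i := by
    rw [Finset.mul_sum]
    exact Finset.sum_congr rfl fun i _ => rfl
  rw [h2]
  have h3 := hp d hd
  rw [sumd] at h3
  push_cast
  push_cast at h3
  linarith

end Stmt10Aux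

namespace Stmt10Aux

variable {m : ℕ}

/-! ### Pointwise formulas -/

lemma sumLin_apply (v : Vec m) : sumLin m v = ∑ i, v i := by
  simp [sumLin]

lemma dotLin_apply (u v : Vec m) : dotLin m u v = ∑ i, u i * v i := by
  simp [dotLin, smul_eq_mul]

lemma projSim_apply (v : Vec m) (l : Fin m) :
    projSim m v l = v l - (m : ℝ)⁻¹ * (∑ i, v i) := by
  simp [projSim, sumLin_apply, LinearMap.smulRight_apply, smul_eq_mul]

lemma projSim_of_sum_zero {v : Vec m} (h : ∑ i, v i = 0) : projSim m v = v := by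
  funext l
  rw [projSim_apply, h, mul_zero, sub_zero]

lemma sum_projSim (hm : m ≠ 0) (v : Vec m) : ∑ l, projSim m v l = 0 := by
  simp only [projSim_apply]
  rw [Finset.sum_sub_distrib, Finset.sum_const, Finset.card_univ, Fintype.card_fin]
  rw [nsmul_eq_mul]
  field_simp
  ring

lemma projSim_idem (hm : m ≠ 0) (v : Vec m) : projSim m (projSim m v) = projSim m v :=
  projSim_of_sum_zero (sum_projSim hm v)

lemma projSph_apply (u v : Vec m) (l : Fin m) :
    projSph m u v l = v l - (∑ i, u i * v i) * u l := by
  simp [projSph, dotLin_apply, LinearMap.smulRight_apply, smul_eq_mul]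

lemma projSph_of_tangent {u v : Vec m} (h : ∑ i, u i * v i = 0) : projSph m u v = v := by
  funext l
  rw [projSph_apply, h, zero_mul, sub_zero]

lemma dPhi_apply (u v : Vec m) (l : Fin m) : dPhi m u v l = 2 * u l * v l := by
  simp [dPhi, smul_eq_mul]
  try ring

lemma sum_dPhi_projSph {u : Vec m} (hu : u ∈ sphereSet m) (v : Vec m) :
    ∑ l, dPhi m u (projSph m u v) l = 0 := by
  have hu' : ∑ i, u i ^ 2 = 1 := hu
  have h1 : ∀ l, dPhi m u (projSph m u v) l
      = 2 * (u l * v l) - (2 * ∑ i, u i * v i) * u l ^ 2 := by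
    intro l
    rw [dPhi_apply, projSph_apply]
    ring
  rw [Finset.sum_congr rfl fun l _ => h1 l, Finset.sum_sub_distrib, ← Finset.mul_sum,
    ← Finset.mul_sum, hu']
  ring

lemma projSim_dPhi_projSph {u : Vec m} (hu : u ∈ sphereSet m) (v : Vec m) :
    projSim m (dPhi m u (projSph m u v)) = dPhi m u (projSph m u v) :=
  projSim_of_sum_zero (sum_dPhi_projSph hu v)

lemma reflLin_apply (i : Fin m) (v : Vec m) (l : Fin m) :
    reflLin m i v l = if l = i then -v l else v l := by
  simp only [reflLin, LinearMap.pi_apply]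
  split <;> simp

/-! ### Expansion of alternating maps in coordinates -/

lemma alt_expand {k : ℕ} (A : (Vec m) [⋀^Fin k]→ₗ[ℝ] ℝ) (v : Fin k → Vec m) :
    A v = ∑ g : Fin k → Fin m, (∏ j, v j (g j)) • A (fun j => Pi.single (g j) 1) := by
  have h1 : v = fun j => ∑ i : Fin m, v j i • (Pi.single i 1 : Vec m) := by
    funext j l
    rw [Finset.sum_apply]
    simp [Pi.single_apply]
  conv_lhs => rw [h1]
  rw [show (A fun j => ∑ i : Fin m, v j i • (Pi.single i 1 : Vec m))
      = A.toMultilinearMap fun j => ∑ i : Fin m, v j i • (Pi.single i 1 : Vec m) from rfl]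
  rw [A.toMultilinearMap.map_sum]
  refine Finset.sum_congr rfl fun g _ => ?_
  exact A.toMultilinearMap.map_smul_univ (fun j => v j (g j)) (fun j => Pi.single (g j) 1)

lemma altSum_apply {k : ℕ} {A : Type*} (s : Finset A)
    (F : A → ((Vec m) [⋀^Fin k]→ₗ[ℝ] ℝ)) (v : Fin k → Vec m) :
    (∑ a ∈ s, F a) v = ∑ a ∈ s, F a v := by
  classical
  induction s using Finset.induction with
  | empty => simp
  | insert a s ha ih =>
      rw [Finset.sum_insert ha, Finset.sum_insert ha, AlternatingMap.add_apply, ih]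

/-! ### PL closure lemmas -/

open MvPolynomial

lemma PL_add {k : ℕ} {r : ℤ} {α β : Form m k} (hα : α ∈ PL m k r) (hβ : β ∈ PL m k r) :
    α + β ∈ PL m k r := by
  intro v
  obtain ⟨p, hp, hpe⟩ := hα v
  obtain ⟨q, hq, hqe⟩ := hβ v
  refine ⟨p + q, degLE_add hp hq, fun x => ?_⟩
  rw [map_add, ← hpe x, ← hqe x]
  rfl

lemma PL_zero {k : ℕ} {r : ℤ} : (0 : Form m k) ∈ PL m k r := by
  intro v
  exact ⟨0, degLE_zero, fun x => by simp⟩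

lemma PL_smul {k : ℕ} {r : ℤ} (c : ℝ) {α : Form m k} (hα : α ∈ PL m k r) :
    c • α ∈ PL m k r := by
  intro v
  obtain ⟨p, hp, hpe⟩ := hα v
  refine ⟨c • p, degLE_smul c hp, fun x => ?_⟩
  rw [smul_eq_C_mul, map_mul, eval_C, ← hpe x]
  rfl

lemma PL_sum {k : ℕ} {r : ℤ} {A : Type*} {s : Finset A} {F : A → Form m k}
    (h : ∀ a ∈ s, F a ∈ PL m k r) : (∑ a ∈ s, F a) ∈ PL m k r := by
  classical
  induction s using Finset.induction with
  | empty => simpa using PL_zero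
  | insert a s ha ih =>
      rw [Finset.sum_insert ha]
      exact PL_add (h a (Finset.mem_insert_self a s))
        (ih fun b hb => h b (Finset.mem_insert_of_mem hb))

/-! ### Key commutation: `Φ^* ∘ res = res ∘ Φ^*` -/

lemma phiPullTS_resSim {k : ℕ} (γ : Form m k) :
    phiPullTS m k (resSim m k γ) = resSph m k (phiPull m k γ) := by
  funext u
  ext v
  simp only [phiPullTS, resSim, resSph, phiPull, AlternatingMap.compLinearMap_apply,
    LinearMap.comp_apply]
  congr 1
  funext j
  exact projSim_dPhi_projSph u.2 (v j)

/-! ### `Φ^*` maps `P_r` into `P_{2r+k}` -/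

lemma phiPull_mem_PL {k r : ℕ} {γ : Form m k} (hγ : γ ∈ PL m k (r : ℤ)) :
    phiPull m k γ ∈ PL m k (2 * (r : ℤ) + k) := by
  classical
  intro v
  choose p hdeg heval using hγ
  refine ⟨∑ g : Fin k → Fin m,
      MvPolynomial.C ((2 : ℝ) ^ k * ∏ j, v j (g j)) *
        ((∏ j, X (g j)) * sqP (p fun j => Pi.single (g j) 1)), ?_, ?_⟩
  · apply degLE_sum
    intro g _
    rw [C_mul']
    apply degLE_smul
    have h1 : degLE (k : ℤ) (∏ j : Fin k, (X (g j) : MvPolynomial (Fin m) ℝ)) := by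
      have := degLE_prod (s := Finset.univ) (f := fun j : Fin k => (X (g j) : MvPolynomial (Fin m) ℝ))
        (r := fun _ => (1 : ℤ)) (fun j _ => degLE_X)
      simpa using this
    have h2 := degLE_sqP (hdeg fun j => Pi.single (g j) 1)
    have := degLE_mul h1 h2
    apply degLE_mono _ this
    omega
  · intro u
    have hexp : phiPull m k γ u v
        = ∑ g : Fin k → Fin m, (∏ j, dPhi m u (v j) (g j)) • γ (Phi m u) (fun j => Pi.single (g j) 1) := by
      rw [show phiPull m k γ u v = γ (Phi m u) (fun j => dPhi m u (v j)) from rfl]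
      exact alt_expand _ _
    rw [hexp, map_sum]
    refine Finset.sum_congr rfl fun g _ => ?_
    rw [map_mul, eval_C, map_mul, eval_sqP, map_prod]
    have h3 : ∀ j : Fin k, dPhi m u (v j) (g j) = 2 * u (g j) * v j (g j) :=
      fun j => dPhi_apply u (v j) (g j)
    rw [Finset.prod_congr rfl fun j _ => h3 j]
    rw [← heval (fun j => Pi.single (g j) 1) (Phi m u)]
    have h4 : ∏ j : Fin k, (2 * u (g j) * v j (g j))
        = (2 : ℝ) ^ k * (∏ j, u (g j)) * ∏ j, v j (g j) := by
      rw [Finset.prod_mul_distrib, Finset.prod_mul_distrib, Finset.prod_const,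
        Finset.card_univ, Fintype.card_fin]
    rw [h4]
    have h5 : ∀ j : Fin k, eval u (X (g j) : MvPolynomial (Fin m) ℝ) = u (g j) :=
      fun j => by rw [eval_X]
    rw [Finset.prod_congr rfl fun j _ => h5 j]
    simp only [smul_eq_mul]
    ring

end Stmt10Aux

namespace Stmt10Aux

variable {m : ℕ}

/-! ### MapsTo: trace and symmetry properties of the pullback -/

lemma zeroOnGamma_phiPullTS {k : ℕ} {a : FormOn m (simplexSet m) k}
    (hB : vanishBdry m k a) : zeroOnGammaSph m k (phiPullTS m k a) := by
  intro u ⟨i, hui⟩ v _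
  have : phiPullTS m k a u v
      = a ⟨Phi m u.1, phi_mem_simplex u.2⟩ (fun j => dPhi m u.1 (projSph m u.1 (v j))) := rfl
  rw [this]
  apply hB _ i
  · show (u.1 i) ^ 2 = 0
    rw [hui]; ring
  · intro j
    constructor
    · exact sum_dPhi_projSph u.2 (v j)
    · rw [dPhi_apply, hui]; ring

lemma phi_reflFun (i : Fin m) (u : Vec m) : Phi m (reflFun m i u) = Phi m u := by
  funext l
  simp only [Phi, reflFun]
  split <;> ring

lemma dPhi_projSph_refl (i : Fin m) (u w : Vec m) :
    dPhi m (reflFun m i u) (projSph m (reflFun m i u) (reflLin m i w))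
      = dPhi m u (projSph m u w) := by
  have hdot : ∑ l, reflFun m i u l * reflLin m i w l = ∑ l, u l * w l := by
    refine Finset.sum_congr rfl fun l _ => ?_
    rw [reflLin_apply]
    simp only [reflFun]
    split <;> ring
  funext l
  rw [dPhi_apply, dPhi_apply, projSph_apply, projSph_apply, hdot, reflLin_apply]
  simp only [reflFun]
  split <;> ring

lemma isEvenSph_phiPullTS {k : ℕ} (a : FormOn m (simplexSet m) k) :
    IsEvenSph m k (phiPullTS m k a) := by
  intro i
  funext u
  ext v
  show phiPullTS m k a ⟨reflFun m i u.1, refl_mem_sphere u.2⟩ (fun j => reflLin m i (v j))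
      = phiPullTS m k a u v
  show a ⟨Phi m (reflFun m i u.1), _⟩
      (fun j => dPhi m (reflFun m i u.1) (projSph m (reflFun m i u.1) (reflLin m i (v j))))
    = a ⟨Phi m u.1, _⟩ (fun j => dPhi m u.1 (projSph m u.1 (v j)))
  have h1 : (⟨Phi m (reflFun m i u.1), phi_mem_simplex (refl_mem_sphere u.2)⟩ : simplexSet m)
      = ⟨Phi m u.1, phi_mem_simplex u.2⟩ := Subtype.ext (phi_reflFun i u.1)
  rw [h1]
  congr 1
  funext j
  exact dPhi_projSph_refl i u.1 (v j)

/-! ### Linearity of the pullback -/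

lemma phiPullTS_add {k : ℕ} (a b : FormOn m (simplexSet m) k) :
    phiPullTS m k (a + b) = phiPullTS m k a + phiPullTS m k b := by
  funext u
  ext v
  simp [phiPullTS, AlternatingMap.compLinearMap_apply, Pi.add_apply, AlternatingMap.add_apply]

lemma phiPullTS_smul {k : ℕ} (c : ℝ) (a : FormOn m (simplexSet m) k) :
    phiPullTS m k (c • a) = c • phiPullTS m k a := by
  funext u
  ext v
  simp [phiPullTS, AlternatingMap.compLinearMap_apply, Pi.smul_apply, AlternatingMap.smul_apply]

end Stmt10Aux

namespace Stmt10Aux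

variable {m : ℕ}

/-! ### Injectivity -/

lemma sqrt_mem_sphere {x : Vec m} (hx : x ∈ simplexSet m) :
    (fun i => Real.sqrt (x i)) ∈ sphereSet m := by
  show ∑ i, Real.sqrt (x i) ^ 2 = 1
  rw [Finset.sum_congr rfl fun i _ => Real.sq_sqrt (hx.1 i)]
  exact hx.2

lemma phi_sqrt {x : Vec m} (hx : ∀ i, 0 ≤ x i) :
    Phi m (fun i => Real.sqrt (x i)) = x :=
  funext fun i => Real.sq_sqrt (hx i)

lemma interior_eq {k : ℕ} {a b : FormOn m (simplexSet m) k}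
    (hab : phiPullTS m k a = phiPullTS m k b)
    {x : Vec m} (hx : x ∈ simplexSet m) (hpos : ∀ i, 0 < x i)
    (t : Fin k → Vec m) (ht : ∀ j, ∑ l, t j l = 0) :
    a ⟨x, hx⟩ t = b ⟨x, hx⟩ t := by
  set u : Vec m := fun i => Real.sqrt (x i) with hu
  have hus : u ∈ sphereSet m := sqrt_mem_sphere hx
  have hupos : ∀ i, 0 < u i := fun i => Real.sqrt_pos.mpr (hpos i)
  set w : Fin k → Vec m := fun j l => t j l / (2 * u l) with hw
  have htang : ∀ j, ∑ l, u l * w j l = 0 := by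
    intro j
    have h1 : ∀ l, u l * w j l = t j l / 2 := by
      intro l
      show u l * (t j l / (2 * u l)) = t j l / 2
      have := (hupos l).ne'
      field_simp
    rw [Finset.sum_congr rfl fun l _ => h1 l, ← Finset.sum_div, ht j, zero_div]
  have hproj : ∀ j, projSph m u (w j) = w j := fun j => projSph_of_tangent (htang j)
  have hdphi : ∀ j, dPhi m u (w j) = t j := by
    intro j
    funext l
    rw [dPhi_apply]
    show 2 * u l * (t j l / (2 * u l)) = t j l
    have := (hupos l).ne'
    field_simp
  have hxphi : (⟨Phi m u, phi_mem_simplex hus⟩ : simplexSet m) = ⟨x, hx⟩ :=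
    Subtype.ext (phi_sqrt fun i => hx.1 i)
  have step : ∀ c : FormOn m (simplexSet m) k,
      phiPullTS m k c ⟨u, hus⟩ w = c ⟨x, hx⟩ t := by
    intro c
    show c ⟨Phi m u, phi_mem_simplex hus⟩ (fun j => dPhi m u (projSph m u (w j))) = _
    rw [hxphi]
    congr 1
    funext j
    rw [hproj j, hdphi j]
  rw [← step a, ← step b, hab]

lemma eq_of_phiPullTS_eq {k : ℕ} {r : ℤ} (hm : m ≠ 0) {γ δ : Form m k}
    (hγ : γ ∈ PL m k r) (hδ : δ ∈ PL m k r)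
    (hab : phiPullTS m k (resSim m k γ) = phiPullTS m k (resSim m k δ)) :
    resSim m k γ = resSim m k δ := by
  have hmR : (m : ℝ) ≠ 0 := Nat.cast_ne_zero.mpr hm
  funext x
  ext v
  show γ x.1 (fun j => projSim m (v j)) = δ x.1 (fun j => projSim m (v j))
  set t : Fin k → Vec m := fun j => projSim m (v j) with hT
  have ht : ∀ j, ∑ l, t j l = 0 := fun j => sum_projSim hm (v j)
  obtain ⟨p, _, hpe⟩ := hγ t
  obtain ⟨q, _, hqe⟩ := hδ t
  rw [hpe x.1, hqe x.1]
  set y : ℝ → Vec m := fun s l => (1 - s) * x.1 l + s * (m : ℝ)⁻¹ with hy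
  have hy0 : y 0 = x.1 := funext fun l => by simp [hy]
  have hmem : ∀ s ∈ Set.Ioc (0:ℝ) 1, y s ∈ simplexSet m ∧ ∀ l, 0 < y s l := by
    intro s hs
    have hpos : ∀ l, 0 < y s l := by
      intro l
      have h1 : 0 ≤ (1 - s) * x.1 l :=
        mul_nonneg (by linarith [hs.2]) (x.2.1 l)
      have h2 : 0 < s * (m : ℝ)⁻¹ := by
        apply mul_pos hs.1
        have : 0 < (m : ℝ) := by exact_mod_cast Nat.pos_of_ne_zero hm
        exact inv_pos.mpr this
      show 0 < (1 - s) * x.1 l + s * (m : ℝ)⁻¹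
      linarith
    refine ⟨⟨fun l => le_of_lt (hpos l), ?_⟩, hpos⟩
    show ∑ l, ((1 - s) * x.1 l + s * (m : ℝ)⁻¹) = 1
    rw [Finset.sum_add_distrib, ← Finset.mul_sum, x.2.2, Finset.sum_const,
      Finset.card_univ, Fintype.card_fin, nsmul_eq_mul]
    field_simp
    ring
  have heq : Set.EqOn (fun s => MvPolynomial.eval (y s) p) (fun s => MvPolynomial.eval (y s) q)
      (Set.Ioc (0:ℝ) 1) := by
    intro s hs
    obtain ⟨hm1, hm2⟩ := hmem s hs
    have h3 := interior_eq hab hm1 hm2 t ht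
    have h4 : ∀ (γ' : Form m k), resSim m k γ' ⟨y s, hm1⟩ t = γ' (y s) t := by
      intro γ'
      show γ' (y s) (fun j => projSim m (t j)) = γ' (y s) t
      congr 1
      funext j
      exact projSim_of_sum_zero (ht j)
    rw [h4, h4] at h3
    show MvPolynomial.eval (y s) p = MvPolynomial.eval (y s) q
    rw [← hpe (y s), ← hqe (y s)]
    exact h3
  have hyc : Continuous y := by
    apply continuous_pi
    intro l
    continuity
  have hF : Continuous fun s => MvPolynomial.eval (y s) p :=
    by
      have h := Continuous.comp (g := fun z : Vec m => MvPolynomial.eval z p) (MvPolynomial.continuous_eval p) hyc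
      exact h
  have hG : Continuous fun s => MvPolynomial.eval (y s) q :=
    by
      have h := Continuous.comp (g := fun z : Vec m => MvPolynomial.eval z q) (MvPolynomial.continuous_eval q) hyc
      exact h
  have hcl := heq.closure hF hG
  have h0 : (0:ℝ) ∈ closure (Set.Ioc (0:ℝ) 1) := by
    rw [closure_Ioc (by norm_num : (0:ℝ) ≠ 1)]
    exact ⟨le_rfl, by norm_num⟩
  have := hcl h0
  simpa [hy0] using this

end Stmt10Aux

namespace Stmt10Aux

open MvPolynomial

variable {m : ℕ}

/-! ### Symmetrization over the reflection group -/

/-- sign vector of a subset -/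
def sgnV (S : Finset (Fin m)) : Fin m → ℝ := fun i => if i ∈ S then -1 else 1

lemma sgnV_sq (S : Finset (Fin m)) (i : Fin m) : sgnV S i * sgnV S i = 1 := by
  unfold sgnV; split <;> norm_num

/-- diagonal linear map -/
def diagLin (ε : Fin m → ℝ) : Vec m →ₗ[ℝ] Vec m :=
  LinearMap.pi fun i => ε i • LinearMap.proj i

lemma diagLin_apply (ε : Fin m → ℝ) (v : Vec m) (l : Fin m) :
    diagLin ε v l = ε l * v l := by
  simp [diagLin, smul_eq_mul]

/-- pointwise multiplication -/
def epMul (ε : Fin m → ℝ) (u : Vec m) : Vec m := fun i => ε i * u i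

/-- pullback of an ambient form along a diagonal sign map -/
def flipF (k : ℕ) (ε : Fin m → ℝ) (β : Form m k) : Form m k :=
  fun u => (β (epMul ε u)).compLinearMap (diagLin ε)

lemma epMul_mem_sphere {S : Finset (Fin m)} {u : Vec m} (hu : u ∈ sphereSet m) :
    epMul (sgnV S) u ∈ sphereSet m := by
  show ∑ i, (sgnV S i * u i) ^ 2 = 1
  have : ∀ i, (sgnV S i * u i) ^ 2 = u i ^ 2 := by
    intro i
    have := sgnV_sq S i
    nlinarith [sgnV_sq S i]
  rw [Finset.sum_congr rfl fun i _ => this i]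
  exact hu

/-- pullback of a sphere form along a diagonal sign map -/
def flipSphS (k : ℕ) (S : Finset (Fin m)) (α : FormOn m (sphereSet m) k) :
    FormOn m (sphereSet m) k :=
  fun u => (α ⟨epMul (sgnV S) u.1, epMul_mem_sphere u.2⟩).compLinearMap (diagLin (sgnV S))

lemma flipF_mem_PL {k : ℕ} {s : ℤ} (ε : Fin m → ℝ) {β : Form m k} (hβ : β ∈ PL m k s) :
    flipF k ε β ∈ PL m k s := by
  intro v
  obtain ⟨p, hp, hpe⟩ := hβ (fun j => epMul ε (v j))
  refine ⟨flipP ε p, degLE_flipP ε hp, fun u => ?_⟩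
  rw [eval_flipP]
  show β (epMul ε u) (fun j => diagLin ε (v j)) = _
  have h1 : (fun j => diagLin ε (v j)) = fun j => epMul ε (v j) := by
    funext j l
    rw [diagLin_apply]
    rfl
  rw [h1, hpe (epMul ε u)]
  rfl

lemma sgnV_empty : sgnV (∅ : Finset (Fin m)) = fun _ => 1 := by
  funext i; simp [sgnV]

lemma flipSphS_empty {k : ℕ} (α : FormOn m (sphereSet m) k) : flipSphS k ∅ α = α := by
  funext u
  ext v
  show α ⟨epMul (sgnV ∅) u.1, _⟩ (fun j => diagLin (sgnV ∅) (v j)) = α u v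
  have h1 : epMul (sgnV ∅) u.1 = u.1 := by
    funext l; simp [epMul, sgnV_empty]
  have h2 : (⟨epMul (sgnV ∅) u.1, epMul_mem_sphere u.2⟩ : sphereSet m) = u :=
    Subtype.ext h1
  rw [h2]
  congr 1
  funext j
  funext l
  rw [diagLin_apply]
  simp [sgnV_empty]

lemma sgnV_insert {S : Finset (Fin m)} {i : Fin m} (hi : i ∉ S) (l : Fin m) :
    sgnV (insert i S) l = if l = i then -sgnV S l else sgnV S l := by
  unfold sgnV
  by_cases hl : l = i
  · subst hl
    simp [hi]
  · simp [hl, Finset.mem_insert]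

lemma flipSphS_insert {k : ℕ} {S : Finset (Fin m)} {i : Fin m} (hi : i ∉ S)
    (α : FormOn m (sphereSet m) k) :
    flipSphS k (insert i S) α = reflPullSph m k i (flipSphS k S α) := by
  funext u
  ext v
  show α ⟨epMul (sgnV (insert i S)) u.1, _⟩ (fun j => diagLin (sgnV (insert i S)) (v j))
      = α ⟨epMul (sgnV S) (reflFun m i u.1), _⟩
          (fun j => diagLin (sgnV S) (reflLin m i (v j)))
  have h1 : epMul (sgnV (insert i S)) u.1 = epMul (sgnV S) (reflFun m i u.1) := by
    funext l
    show sgnV (insert i S) l * u.1 l = sgnV S l * reflFun m i u.1 l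
    rw [sgnV_insert hi]
    unfold reflFun
    split <;> ring
  have h2 : (⟨epMul (sgnV (insert i S)) u.1, epMul_mem_sphere u.2⟩ : sphereSet m)
      = ⟨epMul (sgnV S) (reflFun m i u.1), epMul_mem_sphere (refl_mem_sphere u.2)⟩ :=
    Subtype.ext h1
  rw [h2]
  congr 1
  funext j l
  rw [diagLin_apply, diagLin_apply, reflLin_apply, sgnV_insert hi]
  split <;> ring

lemma flipSphS_of_even {k : ℕ} {α : FormOn m (sphereSet m) k} (hev : IsEvenSph m k α)
    (S : Finset (Fin m)) : flipSphS k S α = α := by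
  classical
  induction S using Finset.induction with
  | empty => exact flipSphS_empty α
  | insert i S hi ih =>
      rw [flipSphS_insert hi, ih, hev i]

lemma resSph_flipF {k : ℕ} (S : Finset (Fin m)) (β : Form m k) :
    resSph m k (flipF k (sgnV S) β) = flipSphS k S (resSph m k β) := by
  funext u
  ext v
  show β (epMul (sgnV S) u.1) (fun j => diagLin (sgnV S) (projSph m u.1 (v j)))
      = β (epMul (sgnV S) u.1) (fun j => projSph m (epMul (sgnV S) u.1) (diagLin (sgnV S) (v j)))
  congr 1
  funext j l
  rw [diagLin_apply, projSph_apply, projSph_apply, diagLin_apply]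
  have hdot : ∑ i, epMul (sgnV S) u.1 i * diagLin (sgnV S) (v j) i = ∑ i, u.1 i * v j i := by
    refine Finset.sum_congr rfl fun i _ => ?_
    rw [diagLin_apply]
    show sgnV S i * u.1 i * (sgnV S i * v j i) = _
    have h5 : sgnV S i * u.1 i * (sgnV S i * v j i)
        = (sgnV S i * sgnV S i) * (u.1 i * v j i) := by ring
    rw [h5, sgnV_sq, one_mul]
  rw [hdot]
  show sgnV S l * (v j l - (∑ i, u.1 i * v j i) * u.1 l)
      = sgnV S l * v j l - (∑ i, u.1 i * v j i) * (sgnV S l * u.1 l)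
  ring

/-- averaging an ambient form over the reflection group -/
def symmAvg (k : ℕ) (β : Form m k) : Form m k :=
  ((2 : ℝ) ^ m)⁻¹ • ∑ S : Finset (Fin m), flipF k (sgnV S) β

lemma symmAvg_mem_PL {k : ℕ} {s : ℤ} {β : Form m k} (hβ : β ∈ PL m k s) :
    symmAvg k β ∈ PL m k s :=
  PL_smul _ (PL_sum fun S _ => flipF_mem_PL (sgnV S) hβ)

lemma resSph_symmAvg {k : ℕ} {β : Form m k} {α : FormOn m (sphereSet m) k}
    (hres : resSph m k β = α) (hev : IsEvenSph m k α) :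
    resSph m k (symmAvg k β) = α := by
  funext u
  ext v
  show ((symmAvg k β) u.1) (fun j => projSph m u.1 (v j)) = α u v
  have h1 : (symmAvg k β) u.1
      = ((2:ℝ)^m)⁻¹ • ∑ S : Finset (Fin m), flipF k (sgnV S) β u.1 := by
    show (((2 : ℝ) ^ m)⁻¹ • ∑ S : Finset (Fin m), flipF k (sgnV S) β) u.1 = _
    rw [Pi.smul_apply, Finset.sum_apply]
  rw [h1, AlternatingMap.smul_apply, altSum_apply]
  have h2 : ∀ S : Finset (Fin m),
      (flipF k (sgnV S) β u.1) (fun j => projSph m u.1 (v j)) = α u v := by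
    intro S
    have h3 : resSph m k (flipF k (sgnV S) β) u v = α u v := by
      rw [resSph_flipF, hres, flipSphS_of_even hev]
    exact h3
  rw [Finset.sum_congr rfl fun S _ => h2 S, Finset.sum_const, Finset.card_univ]
  have hcard : Fintype.card (Finset (Fin m)) = 2 ^ m := by
    rw [Fintype.card_finset, Fintype.card_fin]
  rw [hcard, nsmul_eq_mul, smul_eq_mul]
  push_cast
  have : ((2:ℝ)^m) ≠ 0 := by positivity
  field_simp

lemma sgnV_symmDiff_single (S : Finset (Fin m)) (i : Fin m) (l : Fin m) :
    sgnV (symmDiff S {i}) l = if l = i then -sgnV S l else sgnV S l := by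
  classical
  unfold sgnV
  by_cases hl : l = i
  · subst hl
    by_cases hS : l ∈ S <;> simp [Finset.mem_symmDiff, hS]
  · by_cases hS : l ∈ S <;> simp [Finset.mem_symmDiff, hS, hl]

lemma reflPull_flipF {k : ℕ} (S : Finset (Fin m)) (i : Fin m) (β : Form m k) :
    reflPull m k i (flipF k (sgnV S) β) = flipF k (sgnV (symmDiff S {i})) β := by
  funext u
  ext v
  show β (epMul (sgnV S) (reflFun m i u)) (fun j => diagLin (sgnV S) (reflLin m i (v j)))
      = β (epMul (sgnV (symmDiff S {i})) u) (fun j => diagLin (sgnV (symmDiff S {i})) (v j))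
  have h1 : epMul (sgnV S) (reflFun m i u) = epMul (sgnV (symmDiff S {i})) u := by
    funext l
    show sgnV S l * reflFun m i u l = sgnV (symmDiff S {i}) l * u l
    rw [sgnV_symmDiff_single]
    unfold reflFun
    split <;> ring
  rw [h1]
  congr 1
  funext j l
  rw [diagLin_apply, diagLin_apply, reflLin_apply, sgnV_symmDiff_single]
  split <;> ring

lemma symmAvg_even {k : ℕ} (β : Form m k) : IsEven m k (symmAvg k β) := by
  classical
  intro i
  funext u
  ext v
  have hlhs : reflPull m k i (symmAvg k β) u v
      = ((2:ℝ)^m)⁻¹ * ∑ S : Finset (Fin m), reflPull m k i (flipF k (sgnV S) β) u v := by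
    show (symmAvg k β (reflFun m i u)) (fun j => reflLin m i (v j)) = _
    have h1 : symmAvg k β (reflFun m i u)
        = ((2:ℝ)^m)⁻¹ • ∑ S : Finset (Fin m), flipF k (sgnV S) β (reflFun m i u) := by
      show (((2 : ℝ) ^ m)⁻¹ • ∑ S : Finset (Fin m), flipF k (sgnV S) β) (reflFun m i u) = _
      rw [Pi.smul_apply, Finset.sum_apply]
    rw [h1, AlternatingMap.smul_apply, altSum_apply, smul_eq_mul]
    rfl
  have hrhs : symmAvg k β u v
      = ((2:ℝ)^m)⁻¹ * ∑ S : Finset (Fin m), flipF k (sgnV S) β u v := by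
    show (((2 : ℝ) ^ m)⁻¹ • ∑ S : Finset (Fin m), flipF k (sgnV S) β) u v = _
    rw [Pi.smul_apply, Finset.sum_apply, AlternatingMap.smul_apply, altSum_apply, smul_eq_mul]
  rw [hlhs, hrhs]
  congr 1
  have hinv : Function.Involutive (fun S : Finset (Fin m) => symmDiff S {i}) := by
    intro S
    exact symmDiff_symmDiff_cancel_right {i} S
  rw [← Function.Bijective.sum_comp (hinv.bijective)
    (fun S => flipF k (sgnV S) β u v)]
  refine Finset.sum_congr rfl fun S _ => ?_
  show reflPull m k i (flipF k (sgnV S) β) u v = flipF k (sgnV (symmDiff S {i})) β u v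
  rw [reflPull_flipF]

end Stmt10Aux

namespace Stmt10Aux

open MvPolynomial

variable {m : ℕ}

/-! ### Halving an odd/even polynomial -/

lemma poly_half {r : ℕ} (p : MvPolynomial (Fin m) ℝ) (S : Finset (Fin m))
    (hdeg : degLE (2 * (r : ℤ) + (S.card : ℤ)) p)
    (hpar : ∀ d ∈ p.support, ∀ i, (i ∈ S → Odd (d i)) ∧ (i ∉ S → Even (d i))) :
    ∃ h : MvPolynomial (Fin m) ℝ, degLE (r : ℤ) h ∧
      ∀ u : Vec m, eval u p = (∏ i ∈ S, u i) * eval (Phi m u) h := by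
  classical
  set oneS : Fin m →₀ ℕ := ∑ i ∈ S, Finsupp.single i 1 with honeS
  have oneS_apply : ∀ i, oneS i = if i ∈ S then 1 else 0 := by
    intro i
    rw [honeS, Finsupp.finset_sum_apply]
    rw [Finset.sum_congr rfl fun i' _ => Finsupp.single_apply]
    exact Finset.sum_ite_eq' S i fun _ => 1
  set half : (Fin m →₀ ℕ) → (Fin m →₀ ℕ) :=
    fun d => Finsupp.mapRange (· / 2) (by norm_num) (d - oneS) with hhalf
  have key : ∀ d ∈ p.support, 2 • half d + oneS = d := by
    intro d hd
    ext i
    rw [Finsupp.add_apply, Finsupp.smul_apply, hhalf]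
    simp only [Finsupp.mapRange_apply, Finsupp.tsub_apply]
    rw [oneS_apply i, smul_eq_mul]
    by_cases hi : i ∈ S
    · obtain ⟨c, hc⟩ := ((hpar d hd i).1 hi)
      simp only [hi, if_true]
      omega
    · obtain ⟨c, hc⟩ := ((hpar d hd i).2 hi)
      simp only [hi, if_false]
      omega
  have sum_oneS : ∑ i, oneS i = S.card := by
    rw [Finset.sum_congr rfl fun i _ => oneS_apply i, Finset.sum_ite_mem,
      Finset.univ_inter, Finset.sum_const, smul_eq_mul, mul_one]
  refine ⟨∑ d ∈ p.support, monomial (half d) (coeff d p), ?_, ?_⟩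
  · apply degLE_sum
    intro d hd
    apply degLE_monomial
    rw [sumd]
    have h1 : ∑ i, d i = 2 * (∑ i, half d i) + S.card := by
      conv_lhs => rw [show d = 2 • half d + oneS from (key d hd).symm]
      rw [Finset.sum_congr rfl fun i _ =>
        (by rw [Finsupp.add_apply, Finsupp.smul_apply, smul_eq_mul] :
          (2 • half d + oneS) i = 2 * half d i + oneS i)]
      rw [Finset.sum_add_distrib, ← Finset.mul_sum, sum_oneS]
    have h2 := hdeg d hd
    rw [sumd] at h2
    rw [h1] at h2
    push_cast at h2 ⊢
    linarith
  · intro u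
    have easum : eval u p = ∑ d ∈ p.support, coeff d p * ∏ i, u i ^ d i := by
      conv_lhs => rw [MvPolynomial.as_sum p]
      rw [map_sum]
      refine Finset.sum_congr rfl fun d _ => ?_
      rw [MvPolynomial.eval_monomial]
      congr 1
      exact Finsupp.prod_fintype d _ fun i => pow_zero (u i)
    have hbsum : eval (Phi m u) (∑ d ∈ p.support, monomial (half d) (coeff d p))
        = ∑ d ∈ p.support, coeff d p * ∏ i, (u i ^ 2) ^ (half d i) := by
      rw [map_sum]
      refine Finset.sum_congr rfl fun d _ => ?_
      rw [MvPolynomial.eval_monomial]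
      congr 1
      exact Finsupp.prod_fintype (half d) _ fun i => pow_zero (Phi m u i)
    rw [easum, hbsum, Finset.mul_sum]
    refine Finset.sum_congr rfl fun d hd => ?_
    have hprod : ∏ i, u i ^ d i = (∏ i ∈ S, u i) * ∏ i, (u i ^ 2) ^ (half d i) := by
      conv_lhs => rw [show d = 2 • half d + oneS from (key d hd).symm]
      have h3 : ∀ i : Fin m, u i ^ ((2 • half d + oneS) i)
          = (u i ^ 2) ^ (half d i) * u i ^ (oneS i) := by
        intro i
        rw [show (2 • half d + oneS) i = 2 * half d i + oneS i from
          (by rw [Finsupp.add_apply, Finsupp.smul_apply, smul_eq_mul])]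
        rw [pow_add, pow_mul]
      rw [Finset.prod_congr rfl fun i _ => h3 i, Finset.prod_mul_distrib]
      have h4 : ∏ i, u i ^ (oneS i) = ∏ i ∈ S, u i := by
        have h5 : ∀ i : Fin m, u i ^ (oneS i) = if i ∈ S then u i else 1 := by
          intro i
          rw [oneS_apply i]
          split <;> simp
        rw [Finset.prod_congr rfl fun i _ => h5 i, Finset.prod_ite_mem, Finset.univ_inter]
      rw [h4]
      ring
    rw [hprod]
    ring

end Stmt10Aux

namespace Stmt10Aux

open MvPolynomial

variable {m : ℕ}

/-! ### Elementary alternating forms -/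

def elemM (k : ℕ) (g : Fin k → Fin m) : MultilinearMap ℝ (fun _ : Fin k => Vec m) ℝ :=
  (MultilinearMap.mkPiAlgebra ℝ (Fin k) ℝ).compLinearMap fun j => LinearMap.proj (g j)

def elemE (k : ℕ) (g : Fin k → Fin m) : (Vec m) [⋀^Fin k]→ₗ[ℝ] ℝ :=
  MultilinearMap.alternatization (elemM k g)

lemma elemM_apply {k : ℕ} (g : Fin k → Fin m) (v : Fin k → Vec m) :
    elemM k g v = ∏ j, v j (g j) := by
  simp [elemM]

lemma elemE_apply {k : ℕ} (g : Fin k → Fin m) (v : Fin k → Vec m) :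
    elemE k g v = ∑ σ : Equiv.Perm (Fin k),
      ((Equiv.Perm.sign σ : ℤ) : ℝ) * ∏ j, v (σ j) (g j) := by
  rw [elemE, MultilinearMap.alternatization_apply]
  refine Finset.sum_congr rfl fun σ _ => ?_
  rw [MultilinearMap.domDomCongr_apply, Units.smul_def, zsmul_eq_mul, elemM_apply]

lemma reflLin_single (i l : Fin m) :
    reflLin m i (Pi.single l (1:ℝ)) = (if l = i then (-1:ℝ) else 1) • (Pi.single l 1 : Vec m) := by
  funext t
  rw [reflLin_apply, Pi.smul_apply, smul_eq_mul]
  rcases eq_or_ne t l with rfl | htl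
  · rcases eq_or_ne t i with rfl | hti
    · simp [Pi.single_apply]
    · simp [Pi.single_apply, hti]
  · rcases eq_or_ne t i with rfl | hti
    · simp [Pi.single_apply, htl]
    · simp [Pi.single_apply, htl, hti]

/-! ### Reconstruction: an even polynomial form is a `Φ`-pullback -/

lemma exists_pullback {k r : ℕ} {β : Form m k} (hβ : β ∈ PL m k (2 * (r : ℤ) + k))
    (hev : IsEven m k β) :
    ∃ γ : Form m k, γ ∈ PL m k (r : ℤ) ∧ phiPull m k γ = β := by
  classical
  choose p hdeg heval using hβ
  set P : (Fin k → Fin m) → MvPolynomial (Fin m) ℝ :=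
    fun g => p (fun j => Pi.single (g j) 1) with hPdef
  have hflip : ∀ (g : Fin k → Fin m) (i : Fin m),
      P g = (∏ j, if g j = i then (-1:ℝ) else 1) • flipP (sgnV {i}) (P g) := by
    intro g i
    apply MvPolynomial.funext
    intro u
    have h1 : β u (fun j => Pi.single (g j) 1)
        = β (reflFun m i u) (fun j => reflLin m i (Pi.single (g j) 1)) := by
      conv_lhs => rw [← hev i]
      rfl
    have h2 : (fun j => reflLin m i (Pi.single (g j) (1:ℝ)))
        = fun j => (if g j = i then (-1:ℝ) else 1) • (Pi.single (g j) 1 : Vec m) := by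
      funext j
      exact reflLin_single i (g j)
    have h3 : β (reflFun m i u) (fun j => (if g j = i then (-1:ℝ) else 1) • (Pi.single (g j) 1 : Vec m))
        = (∏ j, if g j = i then (-1:ℝ) else 1) •
            β (reflFun m i u) (fun j => Pi.single (g j) 1) :=
      (β (reflFun m i u)).toMultilinearMap.map_smul_univ _ _
    have h4 : eval (reflFun m i u) (P g) = eval u (flipP (sgnV {i}) (P g)) := by
      rw [eval_flipP]
      have h4' : (fun l => sgnV {i} l * u l) = reflFun m i u := by
        funext l
        unfold reflFun sgnV
        by_cases hl : l = i <;> simp [hl]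
      rw [h4']
    calc eval u (P g) = β u (fun j => Pi.single (g j) 1) := (heval _ u).symm
      _ = (∏ j, if g j = i then (-1:ℝ) else 1) •
            β (reflFun m i u) (fun j => Pi.single (g j) 1) := by rw [h1, h2, h3]
      _ = (∏ j, if g j = i then (-1:ℝ) else 1) * eval (reflFun m i u) (P g) := by
            rw [heval _ (reflFun m i u), smul_eq_mul]
      _ = (∏ j, if g j = i then (-1:ℝ) else 1) * eval u (flipP (sgnV {i}) (P g)) := by rw [h4]
      _ = eval u ((∏ j, if g j = i then (-1:ℝ) else 1) • flipP (sgnV {i}) (P g)) := by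
            rw [smul_eq_C_mul, map_mul, eval_C]
  have hparity : ∀ g : Fin k → Fin m, Function.Injective g →
      ∀ d ∈ (P g).support, ∀ i,
        (i ∈ Finset.image g Finset.univ → Odd (d i)) ∧
        (i ∉ Finset.image g Finset.univ → Even (d i)) := by
    intro g hg d hd i
    have hcoeff := congrArg (coeff d) (hflip g i)
    rw [MvPolynomial.coeff_smul, coeff_flipP, smul_eq_mul] at hcoeff
    have hsgn : (∏ l ∈ d.support, sgnV {i} l ^ d l) = (-1:ℝ) ^ (d i) := by
      have h5 : ∀ l ∈ d.support, sgnV {i} l ^ d l = if l = i then (-1:ℝ)^(d l) else 1 := by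
        intro l _
        unfold sgnV
        by_cases hl : l = i <;> simp [hl]
      rw [Finset.prod_congr rfl h5, Finset.prod_ite_eq' d.support i fun l => (-1:ℝ)^(d l)]
      by_cases hi : i ∈ d.support
      · rw [if_pos hi]
      · rw [if_neg hi, Finsupp.notMem_support_iff.mp hi, pow_zero]
    have hprodc : (∏ j, if g j = i then (-1:ℝ) else 1)
        = if i ∈ Finset.image g Finset.univ then -1 else 1 := by
      by_cases hi : i ∈ Finset.image g Finset.univ
      · obtain ⟨j0, _, rfl⟩ := Finset.mem_image.mp hi
        rw [if_pos hi, Finset.prod_eq_single j0 ?_ ?_]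
        · rw [if_pos rfl]
        · intro j _ hj
          rw [if_neg fun h => hj (hg h)]
        · intro h
          exact absurd (Finset.mem_univ j0) h
      · rw [if_neg hi]
        apply Finset.prod_eq_one
        intro j _
        rw [if_neg fun h => hi (Finset.mem_image.mpr ⟨j, Finset.mem_univ j, h⟩)]
    rw [hsgn, hprodc] at hcoeff
    have hc0 : coeff d (P g) ≠ 0 := MvPolynomial.mem_support_iff.mp hd
    constructor
    · intro hi
      rw [if_pos hi] at hcoeff
      by_contra hodd
      have heven2 : Even (d i) := Nat.not_odd_iff_even.mp hodd
      rw [Even.neg_one_pow heven2] at hcoeff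
      apply hc0
      linarith [hcoeff]
    · intro hi
      rw [if_neg hi] at hcoeff
      by_contra heven2
      have hodd : Odd (d i) := Nat.not_even_iff_odd.mp heven2
      rw [Odd.neg_one_pow hodd] at hcoeff
      apply hc0
      linarith [hcoeff]
  have hhalfex : ∀ g : Fin k → Fin m, Function.Injective g →
      ∃ h, degLE (r : ℤ) h ∧
        ∀ u, eval u (P g) = (∏ i ∈ Finset.image g Finset.univ, u i) * eval (Phi m u) h := by
    intro g hg
    apply poly_half (P g) (Finset.image g Finset.univ) ?_ (hparity g hg)
    have hcard : (Finset.image g Finset.univ).card = k := by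
      rw [Finset.card_image_of_injective _ hg, Finset.card_univ, Fintype.card_fin]
    rw [hcard]
    exact hdeg _
  choose! hPol hPdeg hPeval using hhalfex
  set Q : (Fin k → Fin m) → MvPolynomial (Fin m) ℝ :=
    fun g => if Function.Injective g then hPol g else 0 with hQdef
  have hQdeg : ∀ g, degLE (r : ℤ) (Q g) := by
    intro g
    rw [hQdef]
    dsimp only
    split
    · exact hPdeg _ ‹_›
    · exact degLE_zero
  have KEY : ∀ (g : Fin k → Fin m) (u : Vec m),
      β u (fun j => Pi.single (g j) 1) = (∏ j, u (g j)) * eval (Phi m u) (Q g) := by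
    intro g u
    by_cases hg : Function.Injective g
    · have hQg : Q g = hPol g := by rw [hQdef]; exact if_pos hg
      rw [hQg, heval _ u, hPeval g hg u]
      congr 1
      exact Finset.prod_image fun x _ y _ h => hg h
    · have hQg : Q g = 0 := by rw [hQdef]; exact if_neg hg
      rw [hQg, map_zero, mul_zero]
      obtain ⟨j1, j2, hj12, hne⟩ := Function.not_injective_iff.mp hg
      exact AlternatingMap.map_eq_zero_of_eq _ _ (by rw [hj12]) hne
  have hkfac : ((k.factorial : ℝ)) ≠ 0 := Nat.cast_ne_zero.mpr k.factorial_ne_zero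
  set γ : Form m k := fun x => ∑ g : Fin k → Fin m,
      ((k.factorial : ℝ)⁻¹ * (2:ℝ)⁻¹ ^ k * eval x (Q g)) • elemE k g with hγdef
  have hγapp : ∀ (x : Vec m) (v : Fin k → Vec m),
      γ x v = ∑ g : Fin k → Fin m,
        ((k.factorial : ℝ)⁻¹ * (2:ℝ)⁻¹ ^ k * eval x (Q g)) * elemE k g v := by
    intro x v
    rw [hγdef]
    show (∑ g : Fin k → Fin m, ((k.factorial : ℝ)⁻¹ * (2:ℝ)⁻¹ ^ k * eval x (Q g)) • elemE k g) v = _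
    rw [altSum_apply]
    exact Finset.sum_congr rfl fun g _ => by rw [AlternatingMap.smul_apply, smul_eq_mul]
  refine ⟨γ, ?_, ?_⟩
  · intro v
    refine ⟨∑ g : Fin k → Fin m,
        C ((k.factorial : ℝ)⁻¹ * (2:ℝ)⁻¹ ^ k * elemE k g v) * Q g, ?_, ?_⟩
    · apply degLE_sum
      intro g _
      rw [C_mul']
      exact degLE_smul _ (hQdeg g)
    · intro x
      rw [hγapp x v, map_sum]
      refine Finset.sum_congr rfl fun g _ => ?_
      rw [map_mul, eval_C]
      ring
  · funext u
    ext v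
    have lhs1 : phiPull m k γ u v
        = ∑ g : Fin k → Fin m, ((k.factorial : ℝ)⁻¹ * (2:ℝ)⁻¹ ^ k * eval (Phi m u) (Q g)) *
            elemE k g (fun j => dPhi m u (v j)) := by
      show γ (Phi m u) (fun j => dPhi m u (v j)) = _
      exact hγapp _ _
    have lhs2 : ∀ g : Fin k → Fin m, elemE k g (fun j => dPhi m u (v j))
        = ∑ σ : Equiv.Perm (Fin k), ((Equiv.Perm.sign σ : ℤ) : ℝ) *
            ((2:ℝ)^k * (∏ j, u (g j)) * ∏ j, v (σ j) (g j)) := by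
      intro g
      rw [elemE_apply]
      refine Finset.sum_congr rfl fun σ _ => ?_
      congr 1
      have h6 : ∀ j : Fin k, dPhi m u (v (σ j)) (g j) = 2 * u (g j) * v (σ j) (g j) :=
        fun j => dPhi_apply _ _ _
      rw [Finset.prod_congr rfl fun j _ => h6 j, Finset.prod_mul_distrib,
        Finset.prod_mul_distrib, Finset.prod_const, Finset.card_univ, Fintype.card_fin]
    rw [lhs1, Finset.sum_congr rfl fun g _ => by rw [lhs2 g]]
    have lhs3 : ∑ g : Fin k → Fin m, ((k.factorial : ℝ)⁻¹ * (2:ℝ)⁻¹ ^ k * eval (Phi m u) (Q g)) *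
          (∑ σ : Equiv.Perm (Fin k), ((Equiv.Perm.sign σ : ℤ) : ℝ) *
            ((2:ℝ)^k * (∏ j, u (g j)) * ∏ j, v (σ j) (g j)))
        = ∑ σ : Equiv.Perm (Fin k), ∑ g : Fin k → Fin m,
            ((k.factorial : ℝ)⁻¹ * (2:ℝ)⁻¹ ^ k * eval (Phi m u) (Q g)) *
              (((Equiv.Perm.sign σ : ℤ) : ℝ) *
                ((2:ℝ)^k * (∏ j, u (g j)) * ∏ j, v (σ j) (g j))) := by
      rw [Finset.sum_congr rfl fun g _ => Finset.mul_sum _ _ _]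
      exact Finset.sum_comm
    rw [lhs3]
    have inner : ∀ σ : Equiv.Perm (Fin k),
        ∑ g : Fin k → Fin m, ((k.factorial : ℝ)⁻¹ * (2:ℝ)⁻¹ ^ k * eval (Phi m u) (Q g)) *
            (((Equiv.Perm.sign σ : ℤ) : ℝ) *
              ((2:ℝ)^k * (∏ j, u (g j)) * ∏ j, v (σ j) (g j)))
          = ((Equiv.Perm.sign σ : ℤ) : ℝ) * ((k.factorial : ℝ)⁻¹ * β u (fun j => v (σ j))) := by
      intro σ
      have hexp : β u (fun j => v (σ j)) = ∑ g : Fin k → Fin m,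
          (∏ j, v (σ j) (g j)) • β u (fun j => Pi.single (g j) 1) := alt_expand _ _
      rw [hexp, Finset.mul_sum, Finset.mul_sum]
      refine Finset.sum_congr rfl fun g _ => ?_
      rw [KEY g u, smul_eq_mul]
      have h2 : (2:ℝ)⁻¹^k * (2:ℝ)^k = 1 := by
        rw [← mul_pow]
        norm_num
      have h7 : ((k.factorial : ℝ)⁻¹ * (2:ℝ)⁻¹ ^ k * eval (Phi m u) (Q g)) *
            (((Equiv.Perm.sign σ : ℤ) : ℝ) *
              ((2:ℝ)^k * (∏ j, u (g j)) * ∏ j, v (σ j) (g j)))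
          = ((2:ℝ)⁻¹^k * (2:ℝ)^k) * (((Equiv.Perm.sign σ : ℤ) : ℝ) *
              ((k.factorial : ℝ)⁻¹ * ((∏ j, v (σ j) (g j)) *
                ((∏ j, u (g j)) * eval (Phi m u) (Q g))))) := by ring
      rw [h7, h2, one_mul]
    rw [Finset.sum_congr rfl fun σ _ => inner σ]
    have hperm : ∀ σ : Equiv.Perm (Fin k),
        β u (fun j => v (σ j)) = ((Equiv.Perm.sign σ : ℤ) : ℝ) * β u v := by
      intro σ
      have := AlternatingMap.map_perm (β u) v σ
      rw [show (v ∘ ⇑σ) = fun j => v (σ j) from rfl] at this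
      rw [this, Units.smul_def, zsmul_eq_mul]
    rw [Finset.sum_congr rfl fun σ _ => by rw [hperm σ]]
    have hsq : ∀ σ : Equiv.Perm (Fin k),
        ((Equiv.Perm.sign σ : ℤ) : ℝ) * ((k.factorial : ℝ)⁻¹ *
            (((Equiv.Perm.sign σ : ℤ) : ℝ) * β u v))
          = (k.factorial : ℝ)⁻¹ * β u v := by
      intro σ
      rcases Int.units_eq_one_or (Equiv.Perm.sign σ) with h | h <;> rw [h] <;> push_cast <;> ring
    rw [Finset.sum_congr rfl fun σ _ => hsq σ, Finset.sum_const, Finset.card_univ,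
      Fintype.card_perm, Fintype.card_fin, nsmul_eq_mul]
    field_simp

end Stmt10Aux

namespace Stmt10Aux

open MvPolynomial

variable {m : ℕ}

/-! ### Vanishing trace from vanishing on `Γ` -/

lemma vanishBdry_of_zeroOnGamma {k : ℕ} {r : ℤ} (hm : 2 ≤ m) {γ : Form m k}
    (hγ : γ ∈ PL m k r)
    (hZ : zeroOnGammaSph m k (phiPullTS m k (resSim m k γ))) :
    vanishBdry m k (resSim m k γ) := by
  intro x i hxi w hw
  have hws : ∀ j, ∑ l, w j l = 0 := fun j => (hw j).1
  show γ x.1 (fun j => projSim m (w j)) = 0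
  have hproj : (fun j => projSim m (w j)) = w := funext fun j => projSim_of_sum_zero (hws j)
  rw [hproj]
  have faceStep : ∀ z : Vec m, ∀ hz : z ∈ simplexSet m, z i = 0 →
      (∀ l, l ≠ i → 0 < z l) → γ z w = 0 := by
    intro z hz hzi hzpos
    set u : Vec m := fun l => Real.sqrt (z l) with hu
    have hus : u ∈ sphereSet m := sqrt_mem_sphere hz
    have hui : u i = 0 := by
      show Real.sqrt (z i) = 0
      rw [hzi, Real.sqrt_zero]
    have hul : ∀ l, l ≠ i → 0 < u l := fun l hl => Real.sqrt_pos.mpr (hzpos l hl)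
    set v : Fin k → Vec m := fun j l => if l = i then 0 else w j l / (2 * u l) with hv
    have hvapp : ∀ j l, v j l = if l = i then 0 else w j l / (2 * u l) := fun j l => rfl
    have hdphi : ∀ j, dPhi m u (v j) = w j := by
      intro j
      funext l
      rw [dPhi_apply, hvapp]
      by_cases hl : l = i
      · rw [if_pos hl, hl, (hw j).2]
        ring
      · rw [if_neg hl]
        have := (hul l hl).ne'
        field_simp
    have htang : ∀ j, ∑ l, u l * v j l = 0 := by
      intro j
      have hterm : ∀ l, u l * v j l = if l = i then 0 else w j l / 2 := by
        intro l
        rw [hvapp]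
        by_cases hl : l = i
        · rw [if_pos hl, if_pos hl, mul_zero]
        · rw [if_neg hl, if_neg hl]
          have := (hul l hl).ne'
          field_simp
      rw [Finset.sum_congr rfl fun l _ => hterm l]
      have hsplit : ∀ l : Fin m, (if l = i then (0:ℝ) else w j l / 2)
          = w j l / 2 - (if l = i then w j l / 2 else 0) := by
        intro l
        split <;> ring
      rw [Finset.sum_congr rfl fun l _ => hsplit l, Finset.sum_sub_distrib,
        Finset.sum_ite_eq' Finset.univ i fun l => w j l / 2, if_pos (Finset.mem_univ i),
        ← Finset.sum_div, hws j, (hw j).2]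
      norm_num
    have hprojv : ∀ j, projSph m u (v j) = v j := fun j => projSph_of_tangent (htang j)
    have hZu := hZ ⟨u, hus⟩ ⟨i, hui⟩ v htang
    have hphiz : Phi m u = z := phi_sqrt fun l => hz.1 l
    have hkey : phiPullTS m k (resSim m k γ) ⟨u, hus⟩ v = γ z w := by
      show γ (Phi m u) (fun j => projSim m (dPhi m u (projSph m u (v j)))) = γ z w
      rw [hphiz]
      congr 1
      funext j
      rw [hprojv j, hdphi j]
      exact projSim_of_sum_zero (hws j)
    rw [← hkey]
    exact hZu
  -- continuity
  obtain ⟨q, _, hqe⟩ := hγ w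
  have hm1 : ((m : ℝ) - 1) ≠ 0 := by
    have : (2 : ℝ) ≤ (m : ℝ) := by exact_mod_cast hm
    linarith
  have hm1pos : 0 < (m : ℝ) - 1 := by
    have : (2 : ℝ) ≤ (m : ℝ) := by exact_mod_cast hm
    linarith
  set c : Vec m := fun l => if l = i then 0 else ((m : ℝ) - 1)⁻¹ with hc
  have hcsum : ∑ l, c l = 1 := by
    have hsplit : ∀ l : Fin m, c l
        = ((m : ℝ) - 1)⁻¹ - (if l = i then ((m : ℝ) - 1)⁻¹ else 0) := by
      intro l
      show (if l = i then (0:ℝ) else ((m : ℝ) - 1)⁻¹) = _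
      split <;> ring
    rw [Finset.sum_congr rfl fun l _ => hsplit l, Finset.sum_sub_distrib,
      Finset.sum_ite_eq' Finset.univ i fun _ => ((m : ℝ) - 1)⁻¹, if_pos (Finset.mem_univ i),
      Finset.sum_const, Finset.card_univ, Fintype.card_fin, nsmul_eq_mul]
    field_simp
  set y : ℝ → Vec m := fun s l => (1 - s) * x.1 l + s * c l with hy
  have hy0 : y 0 = x.1 := funext fun l => by simp [hy]
  have hmem : ∀ s ∈ Set.Ioc (0:ℝ) 1,
      ∃ hsm : y s ∈ simplexSet m, y s i = 0 ∧ ∀ l, l ≠ i → 0 < y s l := by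
    intro s hs
    have hnn : ∀ l, 0 ≤ y s l := by
      intro l
      have h1 : 0 ≤ (1 - s) * x.1 l := mul_nonneg (by linarith [hs.2]) (x.2.1 l)
      have h2 : 0 ≤ s * c l := by
        apply mul_nonneg (le_of_lt hs.1)
        show 0 ≤ (if l = i then (0:ℝ) else ((m : ℝ) - 1)⁻¹)
        split
        · exact le_rfl
        · positivity
      show 0 ≤ (1 - s) * x.1 l + s * c l
      linarith
    have hsum : ∑ l, y s l = 1 := by
      show ∑ l, ((1 - s) * x.1 l + s * c l) = 1
      rw [Finset.sum_add_distrib, ← Finset.mul_sum, ← Finset.mul_sum, x.2.2, hcsum]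
      ring
    refine ⟨⟨hnn, hsum⟩, ?_, ?_⟩
    · show (1 - s) * x.1 i + s * c i = 0
      have : c i = 0 := if_pos rfl
      rw [hxi, this]
      ring
    · intro l hl
      have h1 : 0 ≤ (1 - s) * x.1 l := mul_nonneg (by linarith [hs.2]) (x.2.1 l)
      have h2 : 0 < s * c l := by
        apply mul_pos hs.1
        show 0 < (if l = i then (0:ℝ) else ((m : ℝ) - 1)⁻¹)
        rw [if_neg hl]
        positivity
      show 0 < (1 - s) * x.1 l + s * c l
      linarith
  have heq : Set.EqOn (fun s => MvPolynomial.eval (y s) q) (fun _ => (0:ℝ))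
      (Set.Ioc (0:ℝ) 1) := by
    intro s hs
    obtain ⟨hsm, hsi, hspos⟩ := hmem s hs
    show MvPolynomial.eval (y s) q = 0
    rw [← hqe (y s)]
    exact faceStep (y s) hsm hsi hspos
  have hyc : Continuous y := by
    apply continuous_pi
    intro l
    show Continuous fun s : ℝ => (1 - s) * x.1 l + s * c l
    fun_prop
  have hF : Continuous fun s => MvPolynomial.eval (y s) q := by
    have h := Continuous.comp (g := fun z : Vec m => MvPolynomial.eval z q)
      (MvPolynomial.continuous_eval q) hyc
    exact h
  have hcl := heq.closure hF continuous_const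
  have h0 : (0:ℝ) ∈ closure (Set.Ioc (0:ℝ) 1) := by
    rw [closure_Ioc (by norm_num : (0:ℝ) ≠ 1)]
    exact ⟨le_rfl, by norm_num⟩
  have hfin := hcl h0
  rw [hqe x.1]
  simpa [hy0] using hfin

end Stmt10Aux

theorem stmt10 (n k r : ℕ) (hn : 1 ≤ n) (hk : k ≤ n) :
    Set.BijOn (phiPullTS (n + 1) k) (PLosim (n + 1) k (r : ℤ))
      {α | α ∈ PLsph (n + 1) k (2 * (r : ℤ) + k) ∧ zeroOnGammaSph (n + 1) k α ∧
          IsEvenSph (n + 1) k α} ∧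
    (∀ a b, phiPullTS (n + 1) k (a + b) = phiPullTS (n + 1) k a + phiPullTS (n + 1) k b) ∧
    (∀ (c : ℝ) a, phiPullTS (n + 1) k (c • a) = c • phiPullTS (n + 1) k a) := by
  classical
  set m := n + 1 with hmdef
  have hm : m ≠ 0 := Nat.succ_ne_zero n
  refine ⟨⟨?_, ?_, ?_⟩, fun a b => Stmt10Aux.phiPullTS_add a b,
    fun c a => Stmt10Aux.phiPullTS_smul c a⟩
  · -- MapsTo
    rintro a ⟨haPL, haB⟩
    obtain ⟨γ, hγ, rfl⟩ := haPL
    refine ⟨⟨phiPull m k γ, Stmt10Aux.phiPull_mem_PL hγ,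
      (Stmt10Aux.phiPullTS_resSim γ).symm⟩,
      Stmt10Aux.zeroOnGamma_phiPullTS haB,
      Stmt10Aux.isEvenSph_phiPullTS _⟩
  · -- InjOn
    rintro a ha b hb hab
    obtain ⟨γ, hγ, rfl⟩ := ha.1
    obtain ⟨δ, hδ, rfl⟩ := hb.1
    exact Stmt10Aux.eq_of_phiPullTS_eq hm hγ hδ hab
  · -- SurjOn
    rintro α ⟨⟨β0, hβ0, hres⟩, hΓ, hEv⟩
    have hresS : resSph m k (Stmt10Aux.symmAvg k β0) = α :=
      Stmt10Aux.resSph_symmAvg hres hEv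
    have hevS : IsEven m k (Stmt10Aux.symmAvg k β0) := Stmt10Aux.symmAvg_even β0
    have hβS : Stmt10Aux.symmAvg k β0 ∈ PL m k (2 * (r : ℤ) + k) :=
      Stmt10Aux.symmAvg_mem_PL hβ0
    obtain ⟨γ, hγPL, hpull⟩ := Stmt10Aux.exists_pullback hβS hevS
    have hres2 : phiPullTS m k (resSim m k γ) = α := by
      rw [Stmt10Aux.phiPullTS_resSim, hpull, hresS]
    have hB : vanishBdry m k (resSim m k γ) := by
      apply Stmt10Aux.vanishBdry_of_zeroOnGamma (by omega : 2 ≤ m) hγPL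
      rw [hres2]
      exact hΓ
    exact ⟨resSim m k γ, ⟨⟨γ, hγPL, rfl⟩, hB⟩, hres2⟩

end
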